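/- Let β > 0 and let 0 ≤ x₁ < ⋯ < x_k be real numbers with gaps δᵢ = x_{i+1} - xᵢ. Then 𝟙ᵀ Z⁻¹ 𝟙 = 1 + Σ_{i=1}^{k-1} tanh(βδᵢ/2), where Z is the k×k matrix with Z_{ij} = e^{-β|xᵢ - xⱼ|} (which is invertible). -/

import Mathlib

open Finset Matrix

namespace Stmt6Aux

lemma aux_key (β : ℝ) {k : ℕ} (x : Fin k → ℝ) (hmono : Monotone x)
    {a b c : Fin k} (hab : a ≤ b) (hbc : b ≤ c) :
    Real.exp (-β * |x a - x c|) = Real.exp (-β * |x a - x b|) * Real.exp (-β * |x b - x c|) := by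
  have h1 : x a ≤ x b := hmono hab
  have h2 : x b ≤ x c := hmono hbc
  rw [← Real.exp_add]
  congr 1
  rw [abs_sub_comm (x a) (x c), abs_of_nonneg (by linarith),
      abs_sub_comm (x a) (x b), abs_of_nonneg (by linarith),
      abs_sub_comm (x b) (x c), abs_of_nonneg (by linarith)]
  ring

lemma aux_tanh (y : ℝ) (hy : 0 < y) :
    Real.tanh (y / 2) = (1 - Real.exp (-y)) * ((1 - Real.exp (-y) ^ 2)⁻¹ * (1 - Real.exp (-y))) := by
  have hE : Real.exp (-y) = Real.exp (-(y / 2)) ^ 2 := by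
    rw [sq, ← Real.exp_add]; ring_nf
  set u := Real.exp (-(y / 2)) with hu
  have hu0 : 0 < u := Real.exp_pos _
  have hu1 : u < 1 := Real.exp_lt_one_iff.mpr (by linarith)
  have hinv : Real.exp (y / 2) = u⁻¹ := by
    rw [hu, ← Real.exp_neg]; ring_nf
  rw [Real.tanh_eq_sinh_div_cosh, Real.sinh_eq, Real.cosh_eq, hinv, hE]
  have h1 : u ^ 2 < 1 := by nlinarith
  have h2 : (1 : ℝ) - (u ^ 2) ^ 2 ≠ 0 := by nlinarith
  have h3 : u⁻¹ + u ≠ 0 := by positivity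
  have h4 : Real.exp (-y / 2) = u := by rw [hu]; ring_nf
  field_simp
  rw [← hu, eq_div_iff (by rw [show (1:ℝ) - u ^ 4 = 1 - (u ^ 2) ^ 2 by ring]; exact h2)]
  ring

variable (β : ℝ) {n : ℕ} (x : Fin (n + 1) → ℝ)

/-- successor within `Fin (n+1)`, clamped -/
def sc {n : ℕ} (i : Fin (n + 1)) : Fin (n + 1) := ⟨min (i.1 + 1) n, by omega⟩

noncomputable def Zm : Matrix (Fin (n + 1)) (Fin (n + 1)) ℝ :=
  fun i j => Real.exp (-β * |x i - x j|)

noncomputable def t (i : Fin (n + 1)) : ℝ := Real.exp (-β * (x (sc i) - x i))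

noncomputable def Nm : Matrix (Fin (n + 1)) (Fin (n + 1)) ℝ :=
  fun i j => if (i : ℕ) < n ∧ j = sc i then -t β x i else 0

noncomputable def B : Matrix (Fin (n + 1)) (Fin (n + 1)) ℝ := 1 + Nm β x

noncomputable def d (i : Fin (n + 1)) : ℝ := if (i : ℕ) < n then 1 - t β x i ^ 2 else 1

noncomputable def L : Matrix (Fin (n + 1)) (Fin (n + 1)) ℝ :=
  fun i j => if j ≤ i then Zm β x i j else 0

lemma sc_val {n : ℕ} {i : Fin (n + 1)} (hi : (i : ℕ) < n) : ((sc i : Fin (n+1)) : ℕ) = i.1 + 1 := by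
  simp [sc]; omega

lemma le_sc {n : ℕ} (i : Fin (n + 1)) : i ≤ sc i := by
  simp [Fin.le_def, sc]; omega

lemma Zm_symm (i j : Fin (n + 1)) : Zm β x i j = Zm β x j i := by
  simp [Zm, abs_sub_comm]

lemma Zm_diag (i : Fin (n + 1)) : Zm β x i i = 1 := by simp [Zm]

lemma t_eq (hmono : Monotone x) (i : Fin (n + 1)) : Zm β x i (sc i) = t β x i := by
  have := hmono (le_sc i)
  simp only [Zm, t]
  rw [abs_sub_comm, abs_of_nonneg (by linarith)]

lemma stepL (hmono : Monotone x) {i j : Fin (n + 1)} (hji : j ≤ i) :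
    Zm β x (sc i) j = t β x i * Zm β x i j := by
  rw [Zm_symm, show Zm β x j (sc i) = Zm β x j i * Zm β x i (sc i) from
    aux_key β x hmono hji (le_sc i), t_eq β x hmono, Zm_symm]
  ring

lemma stepR (hmono : Monotone x) {i j : Fin (n + 1)} (hi : (i : ℕ) < n) (hij : i < j) :
    Zm β x i j = t β x i * Zm β x (sc i) j := by
  have hsj : sc i ≤ j := by
    rw [Fin.le_def, sc_val hi]
    exact hij
  rw [show Zm β x i j = Zm β x i (sc i) * Zm β x (sc i) j from
    aux_key β x hmono (le_sc i) hsj, t_eq β x hmono]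


lemma sum_N_row (i : Fin (n + 1)) (f : Fin (n + 1) → ℝ) :
    ∑ m, Nm β x i m * f m = if (i : ℕ) < n then -t β x i * f (sc i) else 0 := by
  by_cases hi : (i : ℕ) < n
  · simp [Nm, hi, ite_mul]
  · simp [Nm, hi]

lemma sum_N_col (j : Fin (n + 1)) (f : Fin (n + 1) → ℝ) :
    ∑ m, f m * Nm β x m j = if h : 0 < (j : ℕ) then
      f ⟨j.1 - 1, by omega⟩ * (-t β x ⟨j.1 - 1, by omega⟩) else 0 := by
  by_cases hj : 0 < (j : ℕ)
  · set p : Fin (n + 1) := ⟨j.1 - 1, by omega⟩ with hp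
    have hpn : (p : ℕ) < n := by
      have := j.2; simp [hp]; omega
    have hcond : ∀ m : Fin (n + 1), ((m : ℕ) < n ∧ j = sc m) ↔ m = p := by
      intro m
      constructor
      · rintro ⟨hm, rfl⟩
        have := sc_val hm
        apply Fin.ext
        simp [hp]; omega
      · rintro rfl
        exact ⟨hpn, (Fin.ext (by rw [sc_val hpn]; simp [hp]; omega)).symm⟩
    simp only [Nm, hcond, dif_pos hj]
    simp [mul_ite]
    rfl
  · have hcond : ∀ m : Fin (n + 1), ¬ ((m : ℕ) < n ∧ j = sc m) := by
      rintro m ⟨hm, rfl⟩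
      rw [sc_val hm] at hj
      omega
    simp only [Nm, dif_neg hj]
    rw [Finset.sum_congr rfl (fun m _ => by rw [if_neg (hcond m), mul_zero])]
    simp

lemma hBZ (hmono : Monotone x) : B β x * Zm β x = Matrix.diagonal (d β x) * L β x := by
  ext i j
  rw [Matrix.mul_apply, Matrix.diagonal_mul]
  simp only [B, Matrix.add_apply, add_mul, Finset.sum_add_distrib, Matrix.one_apply, ite_mul,
    one_mul, zero_mul, Finset.sum_ite_eq, Finset.mem_univ, if_true]
  rw [sum_N_row]
  by_cases hi : (i : ℕ) < n
  · rw [if_pos hi]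
    by_cases hji : j ≤ i
    · rw [stepL β x hmono hji]
      simp only [L, if_pos hji, d, if_pos hi]
      ring
    · have hij : i < j := lt_of_not_ge hji
      rw [stepR β x hmono hi hij]
      simp only [L, if_neg hji]
      ring
  · have hji : j ≤ i := by
      rw [Fin.le_def]; have := j.2; omega
    rw [if_neg hi]
    simp only [L, if_pos hji, d, if_neg hi]
    ring

lemma hBL (hmono : Monotone x) : (B β x)ᵀ * L β x = 1 := by
  ext i j
  rw [Matrix.mul_apply]
  simp only [Matrix.transpose_apply, B, Matrix.add_apply, add_mul, Finset.sum_add_distrib,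
    Matrix.one_apply, ite_mul, one_mul, zero_mul, Finset.sum_ite_eq, Finset.sum_ite_eq',
    Finset.mem_univ, if_true]
  have : ∑ m, Nm β x m i * L β x m j = ∑ m, L β x m j * Nm β x m i := by
    exact Finset.sum_congr rfl fun m _ => mul_comm _ _
  rw [this, sum_N_col]
  by_cases hi : 0 < (i : ℕ)
  · rw [dif_pos hi]
    set p : Fin (n + 1) := ⟨i.1 - 1, by omega⟩ with hp
    have hpn : (p : ℕ) < n := by have := i.2; simp [hp]; omega
    have hscp : sc p = i := Fin.ext (by rw [sc_val hpn]; simp [hp]; omega)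
    have hpi : p < i := by rw [Fin.lt_def]; show (i : ℕ) - 1 < i; omega
    rcases lt_trichotomy j i with hji | rfl | hij
    · have hjp : j ≤ p := by rw [Fin.le_def]; simp [hp]; rw [Fin.lt_def] at hji; omega
      have hji' : j ≤ i := le_of_lt hji
      simp only [L, if_pos hji', if_pos hjp, Matrix.one_apply, if_neg (ne_of_gt hji)]
      have : Zm β x i j = Zm β x p j * t β x p := by
        rw [Zm_symm, show Zm β x j i = Zm β x j p * Zm β x p i from
          (by rw [← hscp]; exact aux_key β x hmono hjp (le_sc p)),
          ← hscp, t_eq β x hmono, Zm_symm]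
      rw [this]; ring
    · simp only [L, le_refl, if_pos, if_neg (not_le_of_gt hpi), Matrix.one_apply, if_pos rfl,
        Zm_diag]
      ring
    · have h1 : ¬ j ≤ i := not_le_of_gt hij
      have h2 : ¬ j ≤ p := fun h => h1 (le_trans h (le_of_lt hpi))
      simp only [L, if_neg h1, if_neg h2, Matrix.one_apply, if_neg (ne_of_lt hij)]
      ring
  · rw [dif_neg hi]
    have hi0 : (i : ℕ) = 0 := by omega
    rcases eq_or_ne j i with rfl | hji
    · simp [L, Zm_diag, Matrix.one_apply]
    · have : ¬ j ≤ i := by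
        rw [Fin.le_def]
        have : (j : ℕ) ≠ (i : ℕ) := fun h => hji (Fin.ext h)
        omega
      simp [L, this, Matrix.one_apply, Ne.symm hji]


lemma t_pos (i : Fin (n + 1)) : 0 < t β x i := Real.exp_pos _

lemma t_lt_one (hβ : 0 < β) (hmono : StrictMono x) {i : Fin (n + 1)} (hi : (i : ℕ) < n) :
    t β x i < 1 := by
  apply Real.exp_lt_one_iff.mpr
  have hlt : i < sc i := by rw [Fin.lt_def, sc_val hi]; omega
  have := hmono hlt
  nlinarith

lemma d_ne (hβ : 0 < β) (hmono : StrictMono x) (i : Fin (n + 1)) : d β x i ≠ 0 := by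
  unfold d
  split
  · rename_i hi
    have h1 := t_pos β x i
    have h2 := t_lt_one β x hβ hmono hi
    nlinarith
  · norm_num

noncomputable def W : Matrix (Fin (n + 1)) (Fin (n + 1)) ℝ :=
  (B β x)ᵀ * Matrix.diagonal (fun i => (d β x i)⁻¹) * B β x

lemma hWZ (hβ : 0 < β) (hmono : StrictMono x) : W β x * Zm β x = 1 := by
  have hDD : Matrix.diagonal (fun i => (d β x i)⁻¹) * Matrix.diagonal (d β x) = 1 := by
    rw [Matrix.diagonal_mul_diagonal]
    have : (fun i => (d β x i)⁻¹ * d β x i) = fun _ => (1 : ℝ) := by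
      funext i; exact inv_mul_cancel₀ (d_ne β x hβ hmono i)
    rw [this, Matrix.diagonal_one]
  calc W β x * Zm β x
      = (B β x)ᵀ * (Matrix.diagonal (fun i => (d β x i)⁻¹) * (B β x * Zm β x)) := by
        simp only [W, Matrix.mul_assoc]
    _ = (B β x)ᵀ * ((Matrix.diagonal (fun i => (d β x i)⁻¹) * Matrix.diagonal (d β x)) *
          L β x) := by rw [hBZ β x hmono.monotone, Matrix.mul_assoc]
    _ = (B β x)ᵀ * L β x := by rw [hDD, Matrix.one_mul]
    _ = 1 := hBL β x hmono.monotone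

lemma B_row_sum (m : Fin (n + 1)) :
    ∑ j, B β x m j = if (m : ℕ) < n then 1 - t β x m else 1 := by
  simp only [B, Matrix.add_apply, Finset.sum_add_distrib, Matrix.one_apply]
  rw [show ∑ j, Nm β x m j = ∑ j, Nm β x m j * 1 by simp, sum_N_row]
  simp only [Finset.sum_ite_eq, Finset.mem_univ, if_true]
  split <;> ring

lemma W_sum (hβ : 0 < β) (hmono : StrictMono x) :
    ∑ i, ∑ j, W β x i j =
      1 + ∑ i : Fin n, Real.tanh (β * (x i.succ - x i.castSucc) / 2) := by
  have hW : ∀ i j, W β x i j = ∑ m, B β x m i * ((d β x m)⁻¹ * B β x m j) := by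
    intro i j
    rw [W, Matrix.mul_assoc, Matrix.mul_apply]
    simp only [Matrix.transpose_apply, Matrix.diagonal_mul]
  calc ∑ i, ∑ j, W β x i j
      = ∑ i, ∑ m, B β x m i * ((d β x m)⁻¹ * ∑ j, B β x m j) := by
        refine Finset.sum_congr rfl fun i _ => ?_
        simp_rw [hW, Finset.mul_sum]
        rw [Finset.sum_comm]
    _ = ∑ m, (∑ i, B β x m i) * ((d β x m)⁻¹ * ∑ j, B β x m j) := by
        rw [Finset.sum_comm]
        exact Finset.sum_congr rfl fun m _ => by rw [← Finset.sum_mul]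
    _ = ∑ m : Fin (n + 1), (if (m : ℕ) < n then 1 - t β x m else 1) *
          ((d β x m)⁻¹ * (if (m : ℕ) < n then 1 - t β x m else 1)) := by
        simp_rw [B_row_sum]
    _ = (∑ i : Fin n, Real.tanh (β * (x i.succ - x i.castSucc) / 2)) + 1 := by
        rw [Fin.sum_univ_castSucc]
        congr 1
        · refine Finset.sum_congr rfl fun i _ => ?_
          have hc : ((i.castSucc : Fin (n + 1)) : ℕ) < n := by simpa using i.2
          have hsc : sc i.castSucc = i.succ := Fin.ext (by rw [sc_val hc]; simp)
          have ht : t β x i.castSucc = Real.exp (-(β * (x i.succ - x i.castSucc))) := by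
            rw [t, hsc]; congr 1; ring
          have hy : 0 < β * (x i.succ - x i.castSucc) := by
            have := hmono (Fin.castSucc_lt_succ : i.castSucc < i.succ)
            nlinarith
          rw [if_pos hc, d, if_pos hc, ht]
          exact (aux_tanh _ hy).symm
        · simp [d]
    _ = 1 + ∑ i : Fin n, Real.tanh (β * (x i.succ - x i.castSucc) / 2) := by
        rw [add_comm]


end Stmt6Aux

/-- The finite-line magnitude (Solow–Polasky) formula: for ordered points
`0 ≤ x 0 < x 1 < ⋯` on the line, the exponential similarity matrix is invertible
and the sum of all entries of its inverse is `1 + ∑ tanh (β δᵢ / 2)`. -/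
theorem stmt_6 (β : ℝ) (hβ : 0 < β) (n : ℕ) (x : Fin (n + 1) → ℝ)
    (hx0 : 0 ≤ x 0) (hmono : StrictMono x) :
    let Z : Matrix (Fin (n + 1)) (Fin (n + 1)) ℝ :=
      fun i j => Real.exp (-β * |x i - x j|)
    IsUnit Z.det ∧
    ∑ i, ∑ j, Z⁻¹ i j =
      1 + ∑ i : Fin n, Real.tanh (β * (x i.succ - x i.castSucc) / 2) := by
  intro Z
  have hZ : Z = Stmt6Aux.Zm β x := rfl
  have hWZ := Stmt6Aux.hWZ β x hβ hmono
  constructor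
  · rw [hZ]
    exact Matrix.isUnit_det_of_left_inverse hWZ
  · rw [hZ, Matrix.inv_eq_left_inv hWZ]
    exact Stmt6Aux.W_sum β x hβ hmono
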